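/- For a standard normal random variable X, the tail conditional variance Var[X | X < x] = 1 - xφ(x)/Φ(x) - φ(x)²/Φ(x)² is strictly increasing as a function of x on (-∞, 0). -/

import Mathlib

open MeasureTheory Real

/-- Standard normal density. -/
noncomputable def stdPdf (x : ℝ) : ℝ := (Real.sqrt (2 * Real.pi))⁻¹ * Real.exp (-x ^ 2 / 2)

/-- Standard normal distribution function. -/
noncomputable def stdCdf (x : ℝ) : ℝ := ∫ t in Set.Iic x, stdPdf t

section Aux
open Filter Set

lemma stdPdf_pos (x : ℝ) : 0 < stdPdf x := by
  apply mul_pos (inv_pos.2 (Real.sqrt_pos.2 (by positivity))) (Real.exp_pos _)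

lemma continuous_stdPdf : Continuous stdPdf := by
  unfold stdPdf; fun_prop

lemma integrable_stdPdf : Integrable stdPdf := by
  have h := (integrable_exp_neg_mul_sq (by norm_num : (0:ℝ) < 1/2)).const_mul (Real.sqrt (2*Real.pi))⁻¹
  refine h.congr ?_
  filter_upwards with x
  unfold stdPdf; ring_nf

lemma integrable_mul_stdPdf : Integrable (fun t : ℝ => t * stdPdf t) := by
  have h := (integrable_rpow_mul_exp_neg_mul_sq (by norm_num : (0:ℝ) < 1/2)
    (by norm_num : (-1:ℝ) < 1)).const_mul (Real.sqrt (2*Real.pi))⁻¹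
  refine h.congr ?_
  filter_upwards with x
  simp only [Real.rpow_one]
  unfold stdPdf; ring_nf

lemma hasDerivAt_stdPdf (x : ℝ) : HasDerivAt stdPdf (-x * stdPdf x) x := by
  have h : HasDerivAt (fun y : ℝ => -y ^ 2 / 2) (-x) x := by
    exact (((hasDerivAt_pow 2 x).neg).div_const 2).congr_deriv (by norm_num; ring)
  have h2 := (h.exp).const_mul (Real.sqrt (2*Real.pi))⁻¹
  show HasDerivAt (fun y => (Real.sqrt (2 * Real.pi))⁻¹ * Real.exp (-y ^ 2 / 2)) _ x
  exact h2.congr_deriv (by unfold stdPdf; ring)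

lemma hasDerivAt_stdCdf (x : ℝ) : HasDerivAt stdCdf (stdPdf x) x := by
  have hrepr : stdCdf = fun y => stdCdf (x - 1) + ∫ t in (x-1)..y, stdPdf t := by
    funext y
    rw [eq_comm, ← intervalIntegral.integral_Iic_sub_Iic integrable_stdPdf.integrableOn
      integrable_stdPdf.integrableOn]
    unfold stdCdf; ring
  rw [hrepr]
  exact (intervalIntegral.integral_hasDerivAt_right
    (integrable_stdPdf.intervalIntegrable)
    (continuous_stdPdf.stronglyMeasurableAtFilter _ _)
    continuous_stdPdf.continuousAt).const_add _

lemma stdCdf_nonneg (x : ℝ) : 0 ≤ stdCdf x :=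
  setIntegral_nonneg measurableSet_Iic (fun t _ => (stdPdf_pos t).le)

lemma stdCdf_pos (x : ℝ) : 0 < stdCdf x := by
  have h1 : stdCdf x - stdCdf (x - 1) = ∫ t in (x-1)..x, stdPdf t :=
    intervalIntegral.integral_Iic_sub_Iic integrable_stdPdf.integrableOn
      integrable_stdPdf.integrableOn
  have h2 : 0 < ∫ t in (x-1)..x, stdPdf t :=
    intervalIntegral.intervalIntegral_pos_of_pos
      (integrable_stdPdf.intervalIntegrable) stdPdf_pos (by linarith)
  have := stdCdf_nonneg (x - 1)
  linarith


lemma tendsto_stdPdf_atBot : Tendsto stdPdf atBot (nhds 0) := by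
  have hsq : Tendsto (fun x : ℝ => x ^ 2) atBot atTop := by
    have h := (tendsto_pow_atTop (two_ne_zero)).comp tendsto_neg_atBot_atTop (α := ℝ)
    refine h.congr fun x => ?_
    simp [neg_pow]
  have h1 : Tendsto (fun x : ℝ => -x ^ 2 / 2) atBot atBot := by
    have := tendsto_neg_atTop_atBot.comp hsq
    exact Tendsto.atBot_div_const (by norm_num) (this.congr fun x => rfl)
  have h2 := (Real.tendsto_exp_atBot.comp h1).const_mul (Real.sqrt (2*Real.pi))⁻¹
  unfold stdPdf
  simpa [Function.comp] using h2

lemma integral_neg_mul_stdPdf (x : ℝ) : ∫ t in Set.Iic x, (-t * stdPdf t) = stdPdf x := by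
  have h := MeasureTheory.integral_Iic_of_hasDerivAt_of_tendsto (a := x) (m := 0)
    (f := stdPdf) (f' := fun t => -t * stdPdf t)
    continuous_stdPdf.continuousWithinAt (fun t _ => hasDerivAt_stdPdf t)
    ((integrable_mul_stdPdf.neg.congr (by filter_upwards with t; simp only [Pi.neg_apply]; ring)).integrableOn)
    tendsto_stdPdf_atBot
  simpa using h

lemma stdCdf_le (x : ℝ) (hx : x ≤ -1) : stdCdf x ≤ stdPdf x := by
  rw [← integral_neg_mul_stdPdf x]
  apply setIntegral_mono_on integrable_stdPdf.integrableOn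
    ((integrable_mul_stdPdf.neg.congr (by filter_upwards with t; simp only [Pi.neg_apply]; ring)).integrableOn)
    measurableSet_Iic
  intro t ht
  simp only [Set.mem_Iic] at ht
  nlinarith [stdPdf_pos t]

lemma tendsto_stdCdf_atBot : Tendsto stdCdf atBot (nhds 0) := by
  apply tendsto_of_tendsto_of_tendsto_of_le_of_le' tendsto_const_nhds tendsto_stdPdf_atBot
  · filter_upwards with x using stdCdf_nonneg x
  · filter_upwards [eventually_le_atBot (-1 : ℝ)] with x hx using stdCdf_le x hx

lemma key (x : ℝ) (hx : x < 0) :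
    (Real.sqrt (x^2+8) - 3*x) * stdCdf x < 4 * stdPdf x := by
  set g : ℝ → ℝ := fun y => 4 * stdPdf y / (Real.sqrt (y^2+8) - 3*y) - stdCdf y with hgdef
  have hs0 : ∀ y : ℝ, 0 < Real.sqrt (y^2+8) := fun y => Real.sqrt_pos.2 (by positivity)
  have hu : ∀ y : ℝ, y ≤ 0 → 0 < Real.sqrt (y^2+8) - 3*y := fun y hy => by
    nlinarith [hs0 y]
  have hder : ∀ y : ℝ, y ≤ 0 → HasDerivAt g
      ((4 * (-y * stdPdf y) * (Real.sqrt (y^2+8) - 3*y)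
        - 4 * stdPdf y * (y / Real.sqrt (y^2+8) - 3)) / (Real.sqrt (y^2+8) - 3*y)^2
        - stdPdf y) y := by
    intro y hy
    have h1 : HasDerivAt (fun t : ℝ => t^2+8) (2*y) y := by
      simpa using (hasDerivAt_pow 2 y).add_const 8
    have h2 : HasDerivAt (fun t : ℝ => Real.sqrt (t^2+8)) (y / Real.sqrt (y^2+8)) y := by
      have := h1.sqrt (by positivity)
      convert this using 1
      exact (mul_div_mul_left y _ two_ne_zero).symm
    have h3 : HasDerivAt (fun t : ℝ => Real.sqrt (t^2+8) - 3*t)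
        (y / Real.sqrt (y^2+8) - 3) y := by
      exact (h2.sub ((hasDerivAt_id y).const_mul 3)).congr_deriv (by ring)
    exact (((hasDerivAt_stdPdf y).const_mul 4).div h3 (hu y hy).ne').sub (hasDerivAt_stdCdf y)
  have hdpos : ∀ y : ℝ, y < 0 →
      0 < (4 * (-y * stdPdf y) * (Real.sqrt (y^2+8) - 3*y)
        - 4 * stdPdf y * (y / Real.sqrt (y^2+8) - 3)) / (Real.sqrt (y^2+8) - 3*y)^2
        - stdPdf y := by
    intro y hy
    set s := Real.sqrt (y^2+8) with hs
    have hs2 : s^2 = y^2+8 := Real.sq_sqrt (by positivity)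
    have hsp := hs0 y
    have hup := hu y hy.le
    have hφ := stdPdf_pos y
    have hsne : s ≠ 0 := hsp.ne'
    have hune : s - 3*y ≠ 0 := hup.ne'
    have heq : (4 * (-y * stdPdf y) * (s - 3*y) - 4 * stdPdf y * (y / s - 3)) / (s - 3*y)^2
        - stdPdf y
        = stdPdf y * (-4*y*(s-3*y) - 4*(y/s) + 12 - (s-3*y)^2) / (s-3*y)^2 := by
      rw [eq_div_iff (pow_ne_zero 2 hune), sub_mul, div_mul_cancel₀ _ (pow_ne_zero 2 hune)]
      ring
    rw [heq]
    have hC : y^3 + 6*y < 0 := by nlinarith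
    have hA : 0 < (y^2+2)*s := by positivity
    have hAC : ((y^2+2)*s + (y^3+6*y)) * ((y^2+2)*s - (y^3+6*y)) = 32 := by
      have : ((y^2+2)*s)^2 = (y^3+6*y)^2 + 32 := by
        rw [mul_pow, hs2]; ring
      nlinarith [this]
    have hR : 0 < 2*(y^3+6*y) + 2*(y^2+2)*s := by nlinarith [hAC, hA, hC]
    have hsB : s * (-4*y*(s-3*y) - 4*(y/s) + 12 - (s-3*y)^2)
        = 2*(y^3+6*y) + 2*(y^2+2)*s := by
      have hsy : s * (y / s) = y := by rw [mul_div_assoc']; exact mul_div_cancel_left₀ _ hsne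
      linear_combination (2*y - s) * hs2 - 4 * hsy
    have hB : 0 < -4*y*(s-3*y) - 4*(y/s) + 12 - (s-3*y)^2 := by nlinarith [hsB, hsp, hR]
    exact div_pos (mul_pos hφ hB) (pow_pos hup 2)
  have hmono : StrictMonoOn g (Set.Iic 0) := by
    apply strictMonoOn_of_deriv_pos (convex_Iic 0)
    · intro y hy
      exact ((hder y hy).continuousAt).continuousWithinAt
    · rw [interior_Iic]
      intro y hy
      rw [(hder y hy.le).deriv]
      exact hdpos y hy
  have hlim : Tendsto g atBot (nhds 0) := by
    have hden : Tendsto (fun y : ℝ => Real.sqrt (y^2+8) - 3*y) atBot atTop := by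
      have hneg : Tendsto (fun y : ℝ => -3*y) atBot atTop := by
        have : Tendsto (fun y : ℝ => -y) atBot atTop := tendsto_neg_atBot_atTop
        exact (this.const_mul_atTop (by norm_num : (0:ℝ) < 3)).congr (fun y => by ring)
      exact tendsto_atTop_mono (fun y => by nlinarith [Real.sqrt_nonneg (y^2+8)]) hneg
    have h1 : Tendsto (fun y : ℝ => 4 * stdPdf y / (Real.sqrt (y^2+8) - 3*y)) atBot (nhds 0) :=
      Tendsto.div_atTop (by simpa using tendsto_stdPdf_atBot.const_mul (4:ℝ)) hden
    simpa using h1.sub tendsto_stdCdf_atBot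
  have h0 : ∀ y : ℝ, y ≤ 0 → 0 ≤ g y := by
    intro y hy
    refine le_of_tendsto hlim ?_
    filter_upwards [eventually_le_atBot y] with t ht
    exact hmono.monotoneOn (Set.mem_Iic.2 (ht.trans hy)) (Set.mem_Iic.2 hy) ht
  have hgx : 0 < g x := by
    have h1 := h0 (x-1) (by linarith)
    have h2 := hmono (Set.mem_Iic.2 (by linarith : x - 1 ≤ (0:ℝ))) (Set.mem_Iic.2 hx.le)
      (by linarith)
    linarith
  have hux := hu x hx.le
  rw [hgdef] at hgx
  simp only [sub_pos] at hgx
  calc (Real.sqrt (x^2+8) - 3*x) * stdCdf x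
      < (Real.sqrt (x^2+8) - 3*x) * (4 * stdPdf x / (Real.sqrt (x^2+8) - 3*x)) := by
        exact mul_lt_mul_of_pos_left hgx hux
    _ = 4 * stdPdf x := by rw [mul_div_assoc']; exact mul_div_cancel_left₀ _ hux.ne'

/-- The tail conditional variance `Var[X | X < x] = 1 - xφ(x)/Φ(x) - φ(x)²/Φ(x)²` of a
standard normal is strictly increasing on `(-∞, 0)`. -/
theorem stmt_3 :
    StrictMonoOn
      (fun x : ℝ => 1 - x * stdPdf x / stdCdf x - (stdPdf x) ^ 2 / (stdCdf x) ^ 2)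
      (Set.Iio 0) := by
  have hD : ∀ x : ℝ, HasDerivAt
      (fun x : ℝ => 1 - x * stdPdf x / stdCdf x - (stdPdf x) ^ 2 / (stdCdf x) ^ 2)
      (0 - ((1 * stdPdf x + x * (-x * stdPdf x)) * stdCdf x
            - x * stdPdf x * stdPdf x) / (stdCdf x) ^ 2
         - ((↑2 * stdPdf x ^ 1 * (-x * stdPdf x)) * (stdCdf x) ^ 2
            - (stdPdf x) ^ 2 * (↑2 * stdCdf x ^ 1 * stdPdf x)) / ((stdCdf x) ^ 2) ^ 2) x := by
    intro x
    have d1 : HasDerivAt (fun y : ℝ => y * stdPdf y)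
        (1 * stdPdf x + x * (-x * stdPdf x)) x :=
      (hasDerivAt_id x).mul (hasDerivAt_stdPdf x)
    have d2 := d1.div (hasDerivAt_stdCdf x) (stdCdf_pos x).ne'
    have d3 := (hasDerivAt_stdPdf x).pow 2
    have d4 := (hasDerivAt_stdCdf x).pow 2
    have d5 := d3.div d4 (pow_ne_zero 2 (stdCdf_pos x).ne')
    exact ((hasDerivAt_const x (1:ℝ)).sub d2).sub d5
  apply strictMonoOn_of_deriv_pos (convex_Iio 0)
  · intro x _
    exact (hD x).continuousAt.continuousWithinAt
  · rw [interior_Iio]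
    intro x hx
    rw [(hD x).deriv]
    have hφ := stdPdf_pos x
    have hΦ := stdCdf_pos x
    have hkey := key x hx
    have hs0 : (0:ℝ) ≤ Real.sqrt (x^2+8) := Real.sqrt_nonneg _
    have hs2 : Real.sqrt (x^2+8) ^ 2 = x^2+8 := Real.sq_sqrt (by positivity)
    set s := Real.sqrt (x^2+8)
    set φ := stdPdf x
    set Φ := stdCdf x
    have heq : (0 - ((1 * φ + x * (-x * φ)) * Φ - x * φ * φ) / Φ ^ 2
         - ((↑2 * φ ^ 1 * (-x * φ)) * Φ ^ 2 - φ ^ 2 * (↑2 * Φ ^ 1 * φ)) / (Φ ^ 2) ^ 2)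
        = φ * ((x^2-1)*Φ^2 + 3*x*φ*Φ + 2*φ^2) / Φ^3 := by
      field_simp
      ring
    rw [heq]
    have h1 : 0 < 4*φ - (s - 3*x)*Φ := by linarith
    have h2 : 0 < 4*φ + (s + 3*x)*Φ := by nlinarith [mul_nonneg hs0 hΦ.le]
    have hQ : 0 < (x^2-1)*Φ^2 + 3*x*φ*Φ + 2*φ^2 := by
      nlinarith [mul_pos h1 h2, sq_nonneg Φ, hs2]
    exact div_pos (mul_pos hφ hQ) (pow_pos hΦ 3)

end Aux
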